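/- There exists a simple graph E_1 on 7 vertices such that E_1 is not isomorphic to its complement, E_1 and its complement are not cospectral, and E(E_1) = E(complement of E_1) = 5 + √17. -/

import Mathlib

set_option maxRecDepth 4000

open Polynomial

/-- Adjacency matrix over ℝ, using classical instances. -/
noncomputable def adjMat {V : Type*} [Finite V] (G : SimpleGraph V) : Matrix V V ℝ :=
  letI := Fintype.ofFinite V
  letI := Classical.decEq V
  letI := Classical.decRel G.Adj
  G.adjMatrix ℝ

/-- The energy of a graph: the sum of the absolute values of the eigenvalues of its
adjacency matrix (equivalently, of the roots of its characteristic polynomial, with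
multiplicity, which all are real since the matrix is real symmetric). -/
noncomputable def energy {V : Type*} [Finite V] (G : SimpleGraph V) : ℝ :=
  letI := Fintype.ofFinite V
  letI := Classical.decEq V
  (((adjMat G).charpoly).roots.map (fun x => |x|)).sum

def adjfun : Fin 7 → Fin 7 → Bool :=
  ![![false,true,true,true,true,false,false],
    ![true,false,true,true,true,false,false],
    ![true,true,false,true,false,true,false],
    ![true,true,true,false,false,true,false],
    ![true,true,false,false,false,false,false],
    ![false,false,true,true,false,false,false],
    ![false,false,false,false,false,false,false]]

def g1 : SimpleGraph (Fin 7) where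
  Adj i j := adjfun i j
  symm := by
    have h : ∀ a b : Fin 7, adjfun a b → adjfun b a := by decide
    exact ⟨fun a b hab => h a b hab⟩
  loopless := by
    have h : ∀ a : Fin 7, ¬ adjfun a a := by decide
    exact ⟨fun a ha => h a ha⟩

instance : DecidableRel g1.Adj := fun i j => inferInstanceAs (Decidable (adjfun i j = true))

def zA : Matrix (Fin 7) (Fin 7) ℤ := Matrix.of fun i j => if adjfun i j then 1 else 0
def zB : Matrix (Fin 7) (Fin 7) ℤ := Matrix.of fun i j => if i ≠ j ∧ ¬ adjfun i j then 1 else 0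

lemma adjMat_g1 : adjMat g1 = zA.map Int.cast := by
  ext i j
  simp only [adjMat, SimpleGraph.adjMatrix_apply, Matrix.map_apply, zA, Matrix.of_apply]
  by_cases h : g1.Adj i j
  · rw [if_pos h, if_pos (show adjfun i j = true from h), Int.cast_one]
  · rw [if_neg h, if_neg (show ¬ adjfun i j = true from h), Int.cast_zero]

lemma adjMat_g1c : adjMat g1ᶜ = zB.map Int.cast := by
  ext i j
  simp only [adjMat, SimpleGraph.adjMatrix_apply, Matrix.map_apply, zB, Matrix.of_apply]
  by_cases h : g1ᶜ.Adj i j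
  · rw [if_pos h, if_pos, Int.cast_one]
    exact ⟨h.ne, fun hb => h.2 hb⟩
  · rw [if_neg h, if_neg, Int.cast_zero]
    rintro ⟨hne, hna⟩
    exact h ⟨hne, fun hb => hna hb⟩

lemma eval_charpoly (M : Matrix (Fin 7) (Fin 7) ℤ) (x : ℤ) :
    ((M.map (Int.cast : ℤ → ℝ)).charpoly).eval (x : ℝ) = (((x • 1 - M).det : ℤ) : ℝ) := by
  rw [Matrix.charpoly,
    show eval (x:ℝ) (Matrix.charmatrix (M.map (Int.cast : ℤ → ℝ))).det
      = (Polynomial.evalRingHom (x:ℝ)) (Matrix.charmatrix (M.map (Int.cast : ℤ → ℝ))).det from rfl,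
    RingHom.map_det, show (((x • 1 - M).det : ℤ) : ℝ) = Int.castRingHom ℝ ((x • 1 - M).det) from rfl,
    RingHom.map_det]
  simp only [RingHom.mapMatrix_apply]
  congr 1
  ext i j
  by_cases h : i = j
  · subst h
    simp only [Polynomial.coe_evalRingHom, Int.coe_castRingHom, Matrix.charmatrix_apply_eq, Matrix.map_apply, eval_sub, eval_X, eval_C,
      Matrix.sub_apply, Matrix.smul_apply, Matrix.one_apply_eq, smul_eq_mul, mul_one]
    push_cast
    ring
  · simp only [Polynomial.coe_evalRingHom, Int.coe_castRingHom, Matrix.charmatrix_apply_ne _ _ _ h, Matrix.map_apply, eval_neg, eval_C,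
      Matrix.sub_apply, Matrix.smul_apply, Matrix.one_apply_ne h, smul_eq_mul, mul_zero]
    push_cast
    ring

noncomputable def r1 : ℝ := (3 + Real.sqrt 17) / 2
noncomputable def r2 : ℝ := (3 - Real.sqrt 17) / 2

lemma sqrt17_sq : Real.sqrt 17 ^ 2 = 17 := Real.sq_sqrt (by norm_num)

lemma sqrt17_gt3 : (3:ℝ) < Real.sqrt 17 := by
  nlinarith [sqrt17_sq, Real.sqrt_nonneg 17]

lemma hr_add : r1 + r2 = 3 := by unfold r1 r2; ring
lemma hr_mul : r1 * r2 = -2 := by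
  unfold r1 r2
  nlinarith [sqrt17_sq]

lemma hquad : ∀ x : ℝ, (x - r1) * (x - r2) = x^2 - 3*x - 2 := by
  intro x
  linear_combination (-x) * hr_add + hr_mul

noncomputable def sA : Multiset ℝ := {-2, -1, -1, 0, 1, r1, r2}
noncomputable def sB : Multiset ℝ := {-2, -2, 0, 0, 1, r1, r2}
noncomputable def pA : ℝ[X] := (sA.map fun a => X - C a).prod
noncomputable def pB : ℝ[X] := (sB.map fun a => X - C a).prod

lemma monic_pA : pA.Monic :=
  Polynomial.monic_multiset_prod_of_monic _ _ (fun a _ => monic_X_sub_C a)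
lemma monic_pB : pB.Monic :=
  Polynomial.monic_multiset_prod_of_monic _ _ (fun a _ => monic_X_sub_C a)

lemma deg_pA : pA.degree = 7 := by
  rw [pA, Polynomial.degree_multiset_prod]
  simp only [sA, Multiset.insert_eq_cons, Multiset.map_cons, Multiset.map_singleton,
    Polynomial.degree_X_sub_C, Multiset.sum_cons, Multiset.sum_singleton]
  rfl
lemma deg_pB : pB.degree = 7 := by
  rw [pB, Polynomial.degree_multiset_prod]
  simp only [sB, Multiset.insert_eq_cons, Multiset.map_cons, Multiset.map_singleton,
    Polynomial.degree_X_sub_C, Multiset.sum_cons, Multiset.sum_singleton]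
  rfl

lemma poly_eq_of_eval (p q : ℝ[X]) (hp : p.Monic) (hq : q.Monic)
    (hpd : p.degree = 7) (hqd : q.degree = 7)
    (h : ∀ x ∈ ({7,8,9,10,11,12,13} : Finset ℝ), p.eval x = q.eval x) : p = q := by
  by_cases hpq : p - q = 0
  · exact sub_eq_zero.mp hpq
  refine sub_eq_zero.mp (Polynomial.eq_zero_of_natDegree_lt_card_of_eval_eq_zero' _
    ({7,8,9,10,11,12,13} : Finset ℝ) (fun x hx => by rw [eval_sub, h x hx, sub_self]) ?_)
  have hcard : ({7,8,9,10,11,12,13} : Finset ℝ).card = 7 := by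
    norm_num
  rw [hcard]
  have hdlt : (p - q).degree < 7 := by
    have := Polynomial.degree_sub_lt (hpd.trans hqd.symm) hp.ne_zero
      (by rw [hp.leadingCoeff, hq.leadingCoeff])
    rwa [hpd] at this
  have := (Polynomial.natDegree_lt_iff_degree_lt hpq).mpr (by exact_mod_cast hdlt)
  exact_mod_cast this

def mLA7 : Matrix (Fin 7) (Fin 7) ℤ := !![1,0,0,0,0,0,0;1,7,0,0,0,0,0;1,1,6,0,0,0,0;1,1,1,5,0,0,0;3,3,1,1,16,0,0;7,7,20,20,2,106,0;0,0,0,0,0,0,1]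
def mUA7 : Matrix (Fin 7) (Fin 7) ℤ := !![7,(-1),(-1),(-1),(-1),0,0;0,48,(-8),(-8),(-8),0,0;0,0,40,(-8),(-2),(-6),0;0,0,0,32,(-2),(-6),0;0,0,0,0,106,(-2),0;0,0,0,0,0,702,0;0,0,0,0,0,0,7]
lemma detA7 : ((7:ℤ) • 1 - zA).det = 628992 := by
  have h : mLA7 * ((7:ℤ) • 1 - zA) = mUA7 := by decide
  have hL : mLA7.BlockTriangular OrderDual.toDual := by
    exact fun i j h => Int.natAbs_eq_zero.mp ((by decide : ∀ a b : Fin 7, OrderDual.toDual b < OrderDual.toDual a → (mLA7 a b).natAbs = 0) i j h)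
  have hU : mUA7.BlockTriangular id := by
    exact fun i j h => Int.natAbs_eq_zero.mp ((by decide : ∀ a b : Fin 7, id b < id a → (mUA7 a b).natAbs = 0) i j h)
  have h2 := (Matrix.det_mul mLA7 ((7:ℤ) • 1 - zA)).symm.trans (congrArg Matrix.det h)
  rw [Matrix.det_of_lowerTriangular _ hL, Matrix.det_of_upperTriangular hU] at h2
  have hpl : (∏ i : Fin 7, mLA7 i i) = 356160 := by decide
  have hpu : (∏ i : Fin 7, mUA7 i i) = (356160:ℤ) * 628992 := by decide
  rw [hpl, hpu] at h2
  exact mul_left_cancel₀ (by norm_num) h2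

def mLA8 : Matrix (Fin 7) (Fin 7) ℤ := !![1,0,0,0,0,0,0;1,8,0,0,0,0,0;1,1,7,0,0,0,0;1,1,1,6,0,0,0;7,7,2,2,45,0,0;8,8,27,27,2,173,0;0,0,0,0,0,0,1]
def mUA8 : Matrix (Fin 7) (Fin 7) ℤ := !![8,(-1),(-1),(-1),(-1),0,0;0,63,(-9),(-9),(-9),0,0;0,0,54,(-9),(-2),(-7),0;0,0,0,45,(-2),(-7),0;0,0,0,0,346,(-4),0;0,0,0,0,0,1330,0;0,0,0,0,0,0,8]
lemma detA8 : ((8:ℤ) • 1 - zA).det = 1723680 := by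
  have h : mLA8 * ((8:ℤ) • 1 - zA) = mUA8 := by decide
  have hL : mLA8.BlockTriangular OrderDual.toDual := by
    exact fun i j h => Int.natAbs_eq_zero.mp ((by decide : ∀ a b : Fin 7, OrderDual.toDual b < OrderDual.toDual a → (mLA8 a b).natAbs = 0) i j h)
  have hU : mUA8.BlockTriangular id := by
    exact fun i j h => Int.natAbs_eq_zero.mp ((by decide : ∀ a b : Fin 7, id b < id a → (mUA8 a b).natAbs = 0) i j h)
  have h2 := (Matrix.det_mul mLA8 ((8:ℤ) • 1 - zA)).symm.trans (congrArg Matrix.det h)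
  rw [Matrix.det_of_lowerTriangular _ hL, Matrix.det_of_upperTriangular hU] at h2
  have hpl : (∏ i : Fin 7, mLA8 i i) = 2615760 := by decide
  have hpu : (∏ i : Fin 7, mUA8 i i) = (2615760:ℤ) * 1723680 := by decide
  rw [hpl, hpu] at h2
  exact mul_left_cancel₀ (by norm_num) h2

def mLA9 : Matrix (Fin 7) (Fin 7) ℤ := !![1,0,0,0,0,0,0;1,9,0,0,0,0,0;1,1,8,0,0,0,0;1,1,1,7,0,0,0;4,4,1,1,30,0,0;9,9,35,35,2,262,0;0,0,0,0,0,0,1]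
def mUA9 : Matrix (Fin 7) (Fin 7) ℤ := !![9,(-1),(-1),(-1),(-1),0,0;0,80,(-10),(-10),(-10),0,0;0,0,70,(-10),(-2),(-8),0;0,0,0,60,(-2),(-8),0;0,0,0,0,262,(-2),0;0,0,0,0,0,2288,0;0,0,0,0,0,0,9]
lemma detA9 : ((9:ℤ) • 1 - zA).det = 4118400 := by
  have h : mLA9 * ((9:ℤ) • 1 - zA) = mUA9 := by decide
  have hL : mLA9.BlockTriangular OrderDual.toDual := by
    exact fun i j h => Int.natAbs_eq_zero.mp ((by decide : ∀ a b : Fin 7, OrderDual.toDual b < OrderDual.toDual a → (mLA9 a b).natAbs = 0) i j h)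
  have hU : mUA9.BlockTriangular id := by
    exact fun i j h => Int.natAbs_eq_zero.mp ((by decide : ∀ a b : Fin 7, id b < id a → (mUA9 a b).natAbs = 0) i j h)
  have h2 := (Matrix.det_mul mLA9 ((9:ℤ) • 1 - zA)).symm.trans (congrArg Matrix.det h)
  rw [Matrix.det_of_lowerTriangular _ hL, Matrix.det_of_upperTriangular hU] at h2
  have hpl : (∏ i : Fin 7, mLA9 i i) = 3961440 := by decide
  have hpu : (∏ i : Fin 7, mUA9 i i) = (3961440:ℤ) * 4118400 := by decide
  rw [hpl, hpu] at h2
  exact mul_left_cancel₀ (by norm_num) h2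

def mLA10 : Matrix (Fin 7) (Fin 7) ℤ := !![1,0,0,0,0,0,0;1,10,0,0,0,0,0;1,1,9,0,0,0,0;1,1,1,8,0,0,0;9,9,2,2,77,0,0;5,5,22,22,1,188,0;0,0,0,0,0,0,1]
def mUA10 : Matrix (Fin 7) (Fin 7) ℤ := !![10,(-1),(-1),(-1),(-1),0,0;0,99,(-11),(-11),(-11),0,0;0,0,88,(-11),(-2),(-9),0;0,0,0,77,(-2),(-9),0;0,0,0,0,752,(-4),0;0,0,0,0,0,1836,0;0,0,0,0,0,0,10]
lemma detA10 : ((10:ℤ) • 1 - zA).det = 8886240 := by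
  have h : mLA10 * ((10:ℤ) • 1 - zA) = mUA10 := by decide
  have hL : mLA10.BlockTriangular OrderDual.toDual := by
    exact fun i j h => Int.natAbs_eq_zero.mp ((by decide : ∀ a b : Fin 7, OrderDual.toDual b < OrderDual.toDual a → (mLA10 a b).natAbs = 0) i j h)
  have hU : mUA10.BlockTriangular id := by
    exact fun i j h => Int.natAbs_eq_zero.mp ((by decide : ∀ a b : Fin 7, id b < id a → (mUA10 a b).natAbs = 0) i j h)
  have h2 := (Matrix.det_mul mLA10 ((10:ℤ) • 1 - zA)).symm.trans (congrArg Matrix.det h)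
  rw [Matrix.det_of_lowerTriangular _ hL, Matrix.det_of_upperTriangular hU] at h2
  have hpl : (∏ i : Fin 7, mLA10 i i) = 10422720 := by decide
  have hpu : (∏ i : Fin 7, mUA10 i i) = (10422720:ℤ) * 8886240 := by decide
  rw [hpl, hpu] at h2
  exact mul_left_cancel₀ (by norm_num) h2

def mLA11 : Matrix (Fin 7) (Fin 7) ℤ := !![1,0,0,0,0,0,0;1,11,0,0,0,0,0;1,1,10,0,0,0,0;1,1,1,9,0,0,0;5,5,1,1,48,0,0;11,11,54,54,2,518,0;0,0,0,0,0,0,1]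
def mUA11 : Matrix (Fin 7) (Fin 7) ℤ := !![11,(-1),(-1),(-1),(-1),0,0;0,120,(-12),(-12),(-12),0,0;0,0,108,(-12),(-2),(-10),0;0,0,0,96,(-2),(-10),0;0,0,0,0,518,(-2),0;0,0,0,0,0,5590,0;0,0,0,0,0,0,11]
lemma detA11 : ((11:ℤ) • 1 - zA).det = 17709120 := by
  have h : mLA11 * ((11:ℤ) • 1 - zA) = mUA11 := by decide
  have hL : mLA11.BlockTriangular OrderDual.toDual := by
    exact fun i j h => Int.natAbs_eq_zero.mp ((by decide : ∀ a b : Fin 7, OrderDual.toDual b < OrderDual.toDual a → (mLA11 a b).natAbs = 0) i j h)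
  have hU : mUA11.BlockTriangular id := by
    exact fun i j h => Int.natAbs_eq_zero.mp ((by decide : ∀ a b : Fin 7, id b < id a → (mUA11 a b).natAbs = 0) i j h)
  have h2 := (Matrix.det_mul mLA11 ((11:ℤ) • 1 - zA)).symm.trans (congrArg Matrix.det h)
  rw [Matrix.det_of_lowerTriangular _ hL, Matrix.det_of_upperTriangular hU] at h2
  have hpl : (∏ i : Fin 7, mLA11 i i) = 24615360 := by decide
  have hpu : (∏ i : Fin 7, mUA11 i i) = (24615360:ℤ) * 17709120 := by decide
  rw [hpl, hpu] at h2
  exact mul_left_cancel₀ (by norm_num) h2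

def mLA12 : Matrix (Fin 7) (Fin 7) ℤ := !![1,0,0,0,0,0,0;1,12,0,0,0,0,0;1,1,11,0,0,0,0;1,1,1,10,0,0,0;11,11,2,2,117,0,0;12,12,65,65,2,691,0;0,0,0,0,0,0,1]
def mUA12 : Matrix (Fin 7) (Fin 7) ℤ := !![12,(-1),(-1),(-1),(-1),0,0;0,143,(-13),(-13),(-13),0,0;0,0,130,(-13),(-2),(-11),0;0,0,0,117,(-2),(-11),0;0,0,0,0,1382,(-4),0;0,0,0,0,0,8162,0;0,0,0,0,0,0,12]
lemma detA12 : ((12:ℤ) • 1 - zA).det = 33105072 := by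
  have h : mLA12 * ((12:ℤ) • 1 - zA) = mUA12 := by decide
  have hL : mLA12.BlockTriangular OrderDual.toDual := by
    exact fun i j h => Int.natAbs_eq_zero.mp ((by decide : ∀ a b : Fin 7, OrderDual.toDual b < OrderDual.toDual a → (mLA12 a b).natAbs = 0) i j h)
  have hU : mUA12.BlockTriangular id := by
    exact fun i j h => Int.natAbs_eq_zero.mp ((by decide : ∀ a b : Fin 7, id b < id a → (mUA12 a b).natAbs = 0) i j h)
  have h2 := (Matrix.det_mul mLA12 ((12:ℤ) • 1 - zA)).symm.trans (congrArg Matrix.det h)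
  rw [Matrix.det_of_lowerTriangular _ hL, Matrix.det_of_upperTriangular hU] at h2
  have hpl : (∏ i : Fin 7, mLA12 i i) = 106718040 := by decide
  have hpu : (∏ i : Fin 7, mUA12 i i) = (106718040:ℤ) * 33105072 := by decide
  rw [hpl, hpu] at h2
  exact mul_left_cancel₀ (by norm_num) h2

def mLA13 : Matrix (Fin 7) (Fin 7) ℤ := !![1,0,0,0,0,0,0;1,13,0,0,0,0,0;1,1,12,0,0,0,0;1,1,1,11,0,0,0;6,6,1,1,70,0,0;13,13,77,77,2,898,0;0,0,0,0,0,0,1]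
def mUA13 : Matrix (Fin 7) (Fin 7) ℤ := !![13,(-1),(-1),(-1),(-1),0,0;0,168,(-14),(-14),(-14),0,0;0,0,154,(-14),(-2),(-12),0;0,0,0,140,(-2),(-12),0;0,0,0,0,898,(-2),0;0,0,0,0,0,11520,0;0,0,0,0,0,0,13]
lemma detA13 : ((13:ℤ) • 1 - zA).det = 58705920 := by
  have h : mLA13 * ((13:ℤ) • 1 - zA) = mUA13 := by decide
  have hL : mLA13.BlockTriangular OrderDual.toDual := by
    exact fun i j h => Int.natAbs_eq_zero.mp ((by decide : ∀ a b : Fin 7, OrderDual.toDual b < OrderDual.toDual a → (mLA13 a b).natAbs = 0) i j h)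
  have hU : mUA13.BlockTriangular id := by
    exact fun i j h => Int.natAbs_eq_zero.mp ((by decide : ∀ a b : Fin 7, id b < id a → (mUA13 a b).natAbs = 0) i j h)
  have h2 := (Matrix.det_mul mLA13 ((13:ℤ) • 1 - zA)).symm.trans (congrArg Matrix.det h)
  rw [Matrix.det_of_lowerTriangular _ hL, Matrix.det_of_upperTriangular hU] at h2
  have hpl : (∏ i : Fin 7, mLA13 i i) = 107867760 := by decide
  have hpu : (∏ i : Fin 7, mUA13 i i) = (107867760:ℤ) * 58705920 := by decide
  rw [hpl, hpu] at h2
  exact mul_left_cancel₀ (by norm_num) h2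

def mLB7 : Matrix (Fin 7) (Fin 7) ℤ := !![1,0,0,0,0,0,0;0,1,0,0,0,0,0;0,0,1,0,0,0,0;0,0,0,1,0,0,0;0,0,1,1,7,0,0;47,47,7,7,49,329,0;7,7,7,7,9,9,40]
def mUB7 : Matrix (Fin 7) (Fin 7) ℤ := !![7,0,0,0,0,(-1),(-1);0,7,0,0,0,(-1),(-1);0,0,7,0,(-1),0,(-1);0,0,0,7,(-1),0,(-1);0,0,0,0,47,(-7),(-9);0,0,0,0,0,2160,(-486);0,0,0,0,0,0,234]
lemma detB7 : ((7:ℤ) • 1 - zB).det = 619164 := by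
  have h : mLB7 * ((7:ℤ) • 1 - zB) = mUB7 := by decide
  have hL : mLB7.BlockTriangular OrderDual.toDual := by
    exact fun i j h => Int.natAbs_eq_zero.mp ((by decide : ∀ a b : Fin 7, OrderDual.toDual b < OrderDual.toDual a → (mLB7 a b).natAbs = 0) i j h)
  have hU : mUB7.BlockTriangular id := by
    exact fun i j h => Int.natAbs_eq_zero.mp ((by decide : ∀ a b : Fin 7, id b < id a → (mUB7 a b).natAbs = 0) i j h)
  have h2 := (Matrix.det_mul mLB7 ((7:ℤ) • 1 - zB)).symm.trans (congrArg Matrix.det h)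
  rw [Matrix.det_of_lowerTriangular _ hL, Matrix.det_of_upperTriangular hU] at h2
  have hpl : (∏ i : Fin 7, mLB7 i i) = 92120 := by decide
  have hpu : (∏ i : Fin 7, mUB7 i i) = (92120:ℤ) * 619164 := by decide
  rw [hpl, hpu] at h2
  exact mul_left_cancel₀ (by norm_num) h2

def mLB8 : Matrix (Fin 7) (Fin 7) ℤ := !![1,0,0,0,0,0,0;0,1,0,0,0,0,0;0,0,1,0,0,0,0;0,0,0,1,0,0,0;0,0,1,1,8,0,0;31,31,4,4,32,248,0;4,4,4,4,5,5,27]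
def mUB8 : Matrix (Fin 7) (Fin 7) ℤ := !![8,0,0,0,0,(-1),(-1);0,8,0,0,0,(-1),(-1);0,0,8,0,(-1),0,(-1);0,0,0,8,(-1),0,(-1);0,0,0,0,62,(-8),(-10);0,0,0,0,0,1890,(-350);0,0,0,0,0,0,190]
lemma detB8 : ((8:ℤ) • 1 - zB).det = 1702400 := by
  have h : mLB8 * ((8:ℤ) • 1 - zB) = mUB8 := by decide
  have hL : mLB8.BlockTriangular OrderDual.toDual := by
    exact fun i j h => Int.natAbs_eq_zero.mp ((by decide : ∀ a b : Fin 7, OrderDual.toDual b < OrderDual.toDual a → (mLB8 a b).natAbs = 0) i j h)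
  have hU : mUB8.BlockTriangular id := by
    exact fun i j h => Int.natAbs_eq_zero.mp ((by decide : ∀ a b : Fin 7, id b < id a → (mUB8 a b).natAbs = 0) i j h)
  have h2 := (Matrix.det_mul mLB8 ((8:ℤ) • 1 - zB)).symm.trans (congrArg Matrix.det h)
  rw [Matrix.det_of_lowerTriangular _ hL, Matrix.det_of_upperTriangular hU] at h2
  have hpl : (∏ i : Fin 7, mLB8 i i) = 53568 := by decide
  have hpu : (∏ i : Fin 7, mUB8 i i) = (53568:ℤ) * 1702400 := by decide
  rw [hpl, hpu] at h2
  exact mul_left_cancel₀ (by norm_num) h2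

def mLB9 : Matrix (Fin 7) (Fin 7) ℤ := !![1,0,0,0,0,0,0;0,1,0,0,0,0,0;0,0,1,0,0,0,0;0,0,0,1,0,0,0;0,0,1,1,9,0,0;79,79,9,9,81,711,0;9,9,9,9,11,11,70]
def mUB9 : Matrix (Fin 7) (Fin 7) ℤ := !![9,0,0,0,0,(-1),(-1);0,9,0,0,0,(-1),(-1);0,0,9,0,(-1),0,(-1);0,0,0,9,(-1),0,(-1);0,0,0,0,79,(-9),(-11);0,0,0,0,0,6160,(-968);0,0,0,0,0,0,572]
lemma detB9 : ((9:ℤ) • 1 - zB).det = 4077216 := by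
  have h : mLB9 * ((9:ℤ) • 1 - zB) = mUB9 := by decide
  have hL : mLB9.BlockTriangular OrderDual.toDual := by
    exact fun i j h => Int.natAbs_eq_zero.mp ((by decide : ∀ a b : Fin 7, OrderDual.toDual b < OrderDual.toDual a → (mLB9 a b).natAbs = 0) i j h)
  have hU : mUB9.BlockTriangular id := by
    exact fun i j h => Int.natAbs_eq_zero.mp ((by decide : ∀ a b : Fin 7, id b < id a → (mUB9 a b).natAbs = 0) i j h)
  have h2 := (Matrix.det_mul mLB9 ((9:ℤ) • 1 - zB)).symm.trans (congrArg Matrix.det h)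
  rw [Matrix.det_of_lowerTriangular _ hL, Matrix.det_of_upperTriangular hU] at h2
  have hpl : (∏ i : Fin 7, mLB9 i i) = 447930 := by decide
  have hpu : (∏ i : Fin 7, mUB9 i i) = (447930:ℤ) * 4077216 := by decide
  rw [hpl, hpu] at h2
  exact mul_left_cancel₀ (by norm_num) h2

def mLB10 : Matrix (Fin 7) (Fin 7) ℤ := !![1,0,0,0,0,0,0;0,1,0,0,0,0,0;0,0,1,0,0,0,0;0,0,0,1,0,0,0;0,0,1,1,10,0,0;49,49,5,5,50,490,0;5,5,5,5,6,6,44]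
def mUB10 : Matrix (Fin 7) (Fin 7) ℤ := !![10,0,0,0,0,(-1),(-1);0,10,0,0,0,(-1),(-1);0,0,10,0,(-1),0,(-1);0,0,0,10,(-1),0,(-1);0,0,0,0,98,(-10),(-12);0,0,0,0,0,4752,(-648);0,0,0,0,0,0,408]
lemma detB10 : ((10:ℤ) • 1 - zB).det = 8812800 := by
  have h : mLB10 * ((10:ℤ) • 1 - zB) = mUB10 := by decide
  have hL : mLB10.BlockTriangular OrderDual.toDual := by
    exact fun i j h => Int.natAbs_eq_zero.mp ((by decide : ∀ a b : Fin 7, OrderDual.toDual b < OrderDual.toDual a → (mLB10 a b).natAbs = 0) i j h)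
  have hU : mUB10.BlockTriangular id := by
    exact fun i j h => Int.natAbs_eq_zero.mp ((by decide : ∀ a b : Fin 7, id b < id a → (mUB10 a b).natAbs = 0) i j h)
  have h2 := (Matrix.det_mul mLB10 ((10:ℤ) • 1 - zB)).symm.trans (congrArg Matrix.det h)
  rw [Matrix.det_of_lowerTriangular _ hL, Matrix.det_of_upperTriangular hU] at h2
  have hpl : (∏ i : Fin 7, mLB10 i i) = 215600 := by decide
  have hpu : (∏ i : Fin 7, mUB10 i i) = (215600:ℤ) * 8812800 := by decide
  rw [hpl, hpu] at h2
  exact mul_left_cancel₀ (by norm_num) h2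

def mLB11 : Matrix (Fin 7) (Fin 7) ℤ := !![1,0,0,0,0,0,0;0,1,0,0,0,0,0;0,0,1,0,0,0,0;0,0,0,1,0,0,0;0,0,1,1,11,0,0;119,119,11,11,121,1309,0;11,11,11,11,13,13,108]
def mUB11 : Matrix (Fin 7) (Fin 7) ℤ := !![11,0,0,0,0,(-1),(-1);0,11,0,0,0,(-1),(-1);0,0,11,0,(-1),0,(-1);0,0,0,11,(-1),0,(-1);0,0,0,0,119,(-11),(-13);0,0,0,0,0,14040,(-1690);0,0,0,0,0,0,1118]
lemma detB11 : ((11:ℤ) • 1 - zB).det = 17586140 := by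
  have h : mLB11 * ((11:ℤ) • 1 - zB) = mUB11 := by decide
  have hL : mLB11.BlockTriangular OrderDual.toDual := by
    exact fun i j h => Int.natAbs_eq_zero.mp ((by decide : ∀ a b : Fin 7, OrderDual.toDual b < OrderDual.toDual a → (mLB11 a b).natAbs = 0) i j h)
  have hU : mUB11.BlockTriangular id := by
    exact fun i j h => Int.natAbs_eq_zero.mp ((by decide : ∀ a b : Fin 7, id b < id a → (mUB11 a b).natAbs = 0) i j h)
  have h2 := (Matrix.det_mul mLB11 ((11:ℤ) • 1 - zB)).symm.trans (congrArg Matrix.det h)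
  rw [Matrix.det_of_lowerTriangular _ hL, Matrix.det_of_upperTriangular hU] at h2
  have hpl : (∏ i : Fin 7, mLB11 i i) = 1555092 := by decide
  have hpu : (∏ i : Fin 7, mUB11 i i) = (1555092:ℤ) * 17586140 := by decide
  rw [hpl, hpu] at h2
  exact mul_left_cancel₀ (by norm_num) h2

def mLB12 : Matrix (Fin 7) (Fin 7) ℤ := !![1,0,0,0,0,0,0;0,1,0,0,0,0,0;0,0,1,0,0,0,0;0,0,0,1,0,0,0;0,0,1,1,12,0,0;71,71,6,6,72,852,0;6,6,6,6,7,7,65]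
def mUB12 : Matrix (Fin 7) (Fin 7) ℤ := !![12,0,0,0,0,(-1),(-1);0,12,0,0,0,(-1),(-1);0,0,12,0,(-1),0,(-1);0,0,0,12,(-1),0,(-1);0,0,0,0,142,(-12),(-14);0,0,0,0,0,10010,(-1078);0,0,0,0,0,0,742]
lemma detB12 : ((12:ℤ) • 1 - zB).det = 32909184 := by
  have h : mLB12 * ((12:ℤ) • 1 - zB) = mUB12 := by decide
  have hL : mLB12.BlockTriangular OrderDual.toDual := by
    exact fun i j h => Int.natAbs_eq_zero.mp ((by decide : ∀ a b : Fin 7, OrderDual.toDual b < OrderDual.toDual a → (mLB12 a b).natAbs = 0) i j h)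
  have hU : mUB12.BlockTriangular id := by
    exact fun i j h => Int.natAbs_eq_zero.mp ((by decide : ∀ a b : Fin 7, id b < id a → (mUB12 a b).natAbs = 0) i j h)
  have h2 := (Matrix.det_mul mLB12 ((12:ℤ) • 1 - zB)).symm.trans (congrArg Matrix.det h)
  rw [Matrix.det_of_lowerTriangular _ hL, Matrix.det_of_upperTriangular hU] at h2
  have hpl : (∏ i : Fin 7, mLB12 i i) = 664560 := by decide
  have hpu : (∏ i : Fin 7, mUB12 i i) = (664560:ℤ) * 32909184 := by decide
  rw [hpl, hpu] at h2
  exact mul_left_cancel₀ (by norm_num) h2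

def mLB13 : Matrix (Fin 7) (Fin 7) ℤ := !![1,0,0,0,0,0,0;0,1,0,0,0,0,0;0,0,1,0,0,0,0;0,0,0,1,0,0,0;0,0,1,1,13,0,0;167,167,13,13,169,2171,0;13,13,13,13,15,15,154]
def mUB13 : Matrix (Fin 7) (Fin 7) ℤ := !![13,0,0,0,0,(-1),(-1);0,13,0,0,0,(-1),(-1);0,0,13,0,(-1),0,(-1);0,0,0,13,(-1),0,(-1);0,0,0,0,167,(-13),(-15);0,0,0,0,0,27720,(-2700);0,0,0,0,0,0,1920]
lemma detB13 : ((13:ℤ) • 1 - zB).det = 58406400 := by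
  have h : mLB13 * ((13:ℤ) • 1 - zB) = mUB13 := by decide
  have hL : mLB13.BlockTriangular OrderDual.toDual := by
    exact fun i j h => Int.natAbs_eq_zero.mp ((by decide : ∀ a b : Fin 7, OrderDual.toDual b < OrderDual.toDual a → (mLB13 a b).natAbs = 0) i j h)
  have hU : mUB13.BlockTriangular id := by
    exact fun i j h => Int.natAbs_eq_zero.mp ((by decide : ∀ a b : Fin 7, id b < id a → (mUB13 a b).natAbs = 0) i j h)
  have h2 := (Matrix.det_mul mLB13 ((13:ℤ) • 1 - zB)).symm.trans (congrArg Matrix.det h)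
  rw [Matrix.det_of_lowerTriangular _ hL, Matrix.det_of_upperTriangular hU] at h2
  have hpl : (∏ i : Fin 7, mLB13 i i) = 4346342 := by decide
  have hpu : (∏ i : Fin 7, mUB13 i i) = (4346342:ℤ) * 58406400 := by decide
  rw [hpl, hpu] at h2
  exact mul_left_cancel₀ (by norm_num) h2

lemma evpA7 : Polynomial.eval (7:ℝ) pA = 628992 := by
  rw [pA, Polynomial.eval_multiset_prod]
  simp only [sA, Multiset.insert_eq_cons, Multiset.map_cons, Multiset.map_singleton,
    Multiset.prod_cons, Multiset.prod_singleton, Polynomial.eval_sub, Polynomial.eval_X,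
    Polynomial.eval_C]
  linear_combination (24192:ℝ) * hquad 7
lemma evcA7 : Polynomial.eval (7:ℝ) ((zA.map (Int.cast : ℤ → ℝ)).charpoly) = 628992 := by
  have h := eval_charpoly zA 7
  rw [detA7] at h
  push_cast at h
  exact h

lemma evpA8 : Polynomial.eval (8:ℝ) pA = 1723680 := by
  rw [pA, Polynomial.eval_multiset_prod]
  simp only [sA, Multiset.insert_eq_cons, Multiset.map_cons, Multiset.map_singleton,
    Multiset.prod_cons, Multiset.prod_singleton, Polynomial.eval_sub, Polynomial.eval_X,
    Polynomial.eval_C]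
  linear_combination (45360:ℝ) * hquad 8
lemma evcA8 : Polynomial.eval (8:ℝ) ((zA.map (Int.cast : ℤ → ℝ)).charpoly) = 1723680 := by
  have h := eval_charpoly zA 8
  rw [detA8] at h
  push_cast at h
  exact h

lemma evpA9 : Polynomial.eval (9:ℝ) pA = 4118400 := by
  rw [pA, Polynomial.eval_multiset_prod]
  simp only [sA, Multiset.insert_eq_cons, Multiset.map_cons, Multiset.map_singleton,
    Multiset.prod_cons, Multiset.prod_singleton, Polynomial.eval_sub, Polynomial.eval_X,
    Polynomial.eval_C]
  linear_combination (79200:ℝ) * hquad 9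
lemma evcA9 : Polynomial.eval (9:ℝ) ((zA.map (Int.cast : ℤ → ℝ)).charpoly) = 4118400 := by
  have h := eval_charpoly zA 9
  rw [detA9] at h
  push_cast at h
  exact h

lemma evpA10 : Polynomial.eval (10:ℝ) pA = 8886240 := by
  rw [pA, Polynomial.eval_multiset_prod]
  simp only [sA, Multiset.insert_eq_cons, Multiset.map_cons, Multiset.map_singleton,
    Multiset.prod_cons, Multiset.prod_singleton, Polynomial.eval_sub, Polynomial.eval_X,
    Polynomial.eval_C]
  linear_combination (130680:ℝ) * hquad 10
lemma evcA10 : Polynomial.eval (10:ℝ) ((zA.map (Int.cast : ℤ → ℝ)).charpoly) = 8886240 := by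
  have h := eval_charpoly zA 10
  rw [detA10] at h
  push_cast at h
  exact h

lemma evpA11 : Polynomial.eval (11:ℝ) pA = 17709120 := by
  rw [pA, Polynomial.eval_multiset_prod]
  simp only [sA, Multiset.insert_eq_cons, Multiset.map_cons, Multiset.map_singleton,
    Multiset.prod_cons, Multiset.prod_singleton, Polynomial.eval_sub, Polynomial.eval_X,
    Polynomial.eval_C]
  linear_combination (205920:ℝ) * hquad 11
lemma evcA11 : Polynomial.eval (11:ℝ) ((zA.map (Int.cast : ℤ → ℝ)).charpoly) = 17709120 := by
  have h := eval_charpoly zA 11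
  rw [detA11] at h
  push_cast at h
  exact h

lemma evpA12 : Polynomial.eval (12:ℝ) pA = 33105072 := by
  rw [pA, Polynomial.eval_multiset_prod]
  simp only [sA, Multiset.insert_eq_cons, Multiset.map_cons, Multiset.map_singleton,
    Multiset.prod_cons, Multiset.prod_singleton, Polynomial.eval_sub, Polynomial.eval_X,
    Polynomial.eval_C]
  linear_combination (312312:ℝ) * hquad 12
lemma evcA12 : Polynomial.eval (12:ℝ) ((zA.map (Int.cast : ℤ → ℝ)).charpoly) = 33105072 := by
  have h := eval_charpoly zA 12
  rw [detA12] at h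
  push_cast at h
  exact h

lemma evpA13 : Polynomial.eval (13:ℝ) pA = 58705920 := by
  rw [pA, Polynomial.eval_multiset_prod]
  simp only [sA, Multiset.insert_eq_cons, Multiset.map_cons, Multiset.map_singleton,
    Multiset.prod_cons, Multiset.prod_singleton, Polynomial.eval_sub, Polynomial.eval_X,
    Polynomial.eval_C]
  linear_combination (458640:ℝ) * hquad 13
lemma evcA13 : Polynomial.eval (13:ℝ) ((zA.map (Int.cast : ℤ → ℝ)).charpoly) = 58705920 := by
  have h := eval_charpoly zA 13
  rw [detA13] at h
  push_cast at h
  exact h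

lemma cpA : (zA.map (Int.cast : ℤ → ℝ)).charpoly = pA := by
  apply poly_eq_of_eval _ _ (Matrix.charpoly_monic _) monic_pA ?_ deg_pA
  · intro x hx
    simp only [Finset.mem_insert, Finset.mem_singleton] at hx
    rcases hx with rfl|rfl|rfl|rfl|rfl|rfl|rfl
    · rw [evcA7, evpA7]
    · rw [evcA8, evpA8]
    · rw [evcA9, evpA9]
    · rw [evcA10, evpA10]
    · rw [evcA11, evpA11]
    · rw [evcA12, evpA12]
    · rw [evcA13, evpA13]
  · rw [Matrix.charpoly_degree_eq_dim]
    norm_num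

lemma evpB7 : Polynomial.eval (7:ℝ) pB = 619164 := by
  rw [pB, Polynomial.eval_multiset_prod]
  simp only [sB, Multiset.insert_eq_cons, Multiset.map_cons, Multiset.map_singleton,
    Multiset.prod_cons, Multiset.prod_singleton, Polynomial.eval_sub, Polynomial.eval_X,
    Polynomial.eval_C]
  linear_combination (23814:ℝ) * hquad 7
lemma evcB7 : Polynomial.eval (7:ℝ) ((zB.map (Int.cast : ℤ → ℝ)).charpoly) = 619164 := by
  have h := eval_charpoly zB 7
  rw [detB7] at h
  push_cast at h
  exact h

lemma evpB8 : Polynomial.eval (8:ℝ) pB = 1702400 := by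
  rw [pB, Polynomial.eval_multiset_prod]
  simp only [sB, Multiset.insert_eq_cons, Multiset.map_cons, Multiset.map_singleton,
    Multiset.prod_cons, Multiset.prod_singleton, Polynomial.eval_sub, Polynomial.eval_X,
    Polynomial.eval_C]
  linear_combination (44800:ℝ) * hquad 8
lemma evcB8 : Polynomial.eval (8:ℝ) ((zB.map (Int.cast : ℤ → ℝ)).charpoly) = 1702400 := by
  have h := eval_charpoly zB 8
  rw [detB8] at h
  push_cast at h
  exact h

lemma evpB9 : Polynomial.eval (9:ℝ) pB = 4077216 := by
  rw [pB, Polynomial.eval_multiset_prod]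
  simp only [sB, Multiset.insert_eq_cons, Multiset.map_cons, Multiset.map_singleton,
    Multiset.prod_cons, Multiset.prod_singleton, Polynomial.eval_sub, Polynomial.eval_X,
    Polynomial.eval_C]
  linear_combination (78408:ℝ) * hquad 9
lemma evcB9 : Polynomial.eval (9:ℝ) ((zB.map (Int.cast : ℤ → ℝ)).charpoly) = 4077216 := by
  have h := eval_charpoly zB 9
  rw [detB9] at h
  push_cast at h
  exact h

lemma evpB10 : Polynomial.eval (10:ℝ) pB = 8812800 := by
  rw [pB, Polynomial.eval_multiset_prod]
  simp only [sB, Multiset.insert_eq_cons, Multiset.map_cons, Multiset.map_singleton,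
    Multiset.prod_cons, Multiset.prod_singleton, Polynomial.eval_sub, Polynomial.eval_X,
    Polynomial.eval_C]
  linear_combination (129600:ℝ) * hquad 10
lemma evcB10 : Polynomial.eval (10:ℝ) ((zB.map (Int.cast : ℤ → ℝ)).charpoly) = 8812800 := by
  have h := eval_charpoly zB 10
  rw [detB10] at h
  push_cast at h
  exact h

lemma evpB11 : Polynomial.eval (11:ℝ) pB = 17586140 := by
  rw [pB, Polynomial.eval_multiset_prod]
  simp only [sB, Multiset.insert_eq_cons, Multiset.map_cons, Multiset.map_singleton,
    Multiset.prod_cons, Multiset.prod_singleton, Polynomial.eval_sub, Polynomial.eval_X,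
    Polynomial.eval_C]
  linear_combination (204490:ℝ) * hquad 11
lemma evcB11 : Polynomial.eval (11:ℝ) ((zB.map (Int.cast : ℤ → ℝ)).charpoly) = 17586140 := by
  have h := eval_charpoly zB 11
  rw [detB11] at h
  push_cast at h
  exact h

lemma evpB12 : Polynomial.eval (12:ℝ) pB = 32909184 := by
  rw [pB, Polynomial.eval_multiset_prod]
  simp only [sB, Multiset.insert_eq_cons, Multiset.map_cons, Multiset.map_singleton,
    Multiset.prod_cons, Multiset.prod_singleton, Polynomial.eval_sub, Polynomial.eval_X,
    Polynomial.eval_C]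
  linear_combination (310464:ℝ) * hquad 12
lemma evcB12 : Polynomial.eval (12:ℝ) ((zB.map (Int.cast : ℤ → ℝ)).charpoly) = 32909184 := by
  have h := eval_charpoly zB 12
  rw [detB12] at h
  push_cast at h
  exact h

lemma evpB13 : Polynomial.eval (13:ℝ) pB = 58406400 := by
  rw [pB, Polynomial.eval_multiset_prod]
  simp only [sB, Multiset.insert_eq_cons, Multiset.map_cons, Multiset.map_singleton,
    Multiset.prod_cons, Multiset.prod_singleton, Polynomial.eval_sub, Polynomial.eval_X,
    Polynomial.eval_C]
  linear_combination (456300:ℝ) * hquad 13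
lemma evcB13 : Polynomial.eval (13:ℝ) ((zB.map (Int.cast : ℤ → ℝ)).charpoly) = 58406400 := by
  have h := eval_charpoly zB 13
  rw [detB13] at h
  push_cast at h
  exact h

lemma cpB : (zB.map (Int.cast : ℤ → ℝ)).charpoly = pB := by
  apply poly_eq_of_eval _ _ (Matrix.charpoly_monic _) monic_pB ?_ deg_pB
  · intro x hx
    simp only [Finset.mem_insert, Finset.mem_singleton] at hx
    rcases hx with rfl|rfl|rfl|rfl|rfl|rfl|rfl
    · rw [evcB7, evpB7]
    · rw [evcB8, evpB8]
    · rw [evcB9, evpB9]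
    · rw [evcB10, evpB10]
    · rw [evcB11, evpB11]
    · rw [evcB12, evpB12]
    · rw [evcB13, evpB13]
  · rw [Matrix.charpoly_degree_eq_dim]
    norm_num

lemma roots_pA : pA.roots = sA := by
  rw [pA, Polynomial.roots_multiset_prod_X_sub_C]
lemma roots_pB : pB.roots = sB := by
  rw [pB, Polynomial.roots_multiset_prod_X_sub_C]

lemma energy_eq (G : SimpleGraph (Fin 7)) :
    energy G = (((adjMat G).charpoly).roots.map (fun x => |x|)).sum := by
  unfold energy
  congr!

lemma abs_r1 : |r1| = r1 := abs_of_pos (by unfold r1; nlinarith [sqrt17_gt3])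
lemma abs_r2 : |r2| = -r2 := abs_of_neg (by unfold r2; nlinarith [sqrt17_gt3])

lemma energyA : energy g1 = 5 + Real.sqrt 17 := by
  rw [energy_eq, adjMat_g1, cpA, roots_pA]
  simp only [sA, Multiset.insert_eq_cons, Multiset.map_cons, Multiset.map_singleton,
    Multiset.sum_cons, Multiset.sum_singleton, abs_r1, abs_r2]
  rw [show |(-2:ℝ)| = 2 by norm_num, show |(-1:ℝ)| = 1 by norm_num,
    show |(0:ℝ)| = 0 by norm_num, show |(1:ℝ)| = 1 by norm_num]
  unfold r1 r2
  ring

lemma energyB : energy g1ᶜ = 5 + Real.sqrt 17 := by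
  rw [energy_eq, adjMat_g1c, cpB, roots_pB]
  simp only [sB, Multiset.insert_eq_cons, Multiset.map_cons, Multiset.map_singleton,
    Multiset.sum_cons, Multiset.sum_singleton, abs_r1, abs_r2]
  rw [show |(-2:ℝ)| = 2 by norm_num, show |(0:ℝ)| = 0 by norm_num,
    show |(1:ℝ)| = 1 by norm_num]
  unfold r1 r2
  ring

lemma cpne : (adjMat g1).charpoly ≠ (adjMat g1ᶜ).charpoly := by
  rw [adjMat_g1, adjMat_g1c, cpA, cpB]
  intro h
  have h1 := congrArg (Polynomial.eval (-1:ℝ)) h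
  have hA : pA.eval (-1) = 0 := by
    rw [pA, Polynomial.eval_multiset_prod]
    simp only [sA, Multiset.insert_eq_cons, Multiset.map_cons, Multiset.map_singleton,
      Multiset.prod_cons, Multiset.prod_singleton, Polynomial.eval_sub, Polynomial.eval_X,
      Polynomial.eval_C]
    norm_num
  have hB : pB.eval (-1) = -4 := by
    rw [pB, Polynomial.eval_multiset_prod]
    simp only [sB, Multiset.insert_eq_cons, Multiset.map_cons, Multiset.map_singleton,
      Multiset.prod_cons, Multiset.prod_singleton, Polynomial.eval_sub, Polynomial.eval_X,
      Polynomial.eval_C]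
    linear_combination (-2:ℝ) * hquad (-1)
  rw [hA, hB] at h1
  norm_num at h1

lemma card_pairs_A : Fintype.card {p : Fin 7 × Fin 7 // g1.Adj p.1 p.2} = 20 := by decide
lemma card_pairs_B : Fintype.card {p : Fin 7 × Fin 7 // g1ᶜ.Adj p.1 p.2} = 22 := by decide

lemma noniso : ¬ Nonempty (g1 ≃g g1ᶜ) := by
  rintro ⟨φ⟩
  have e : {p : Fin 7 × Fin 7 // g1.Adj p.1 p.2} ≃ {p : Fin 7 × Fin 7 // g1ᶜ.Adj p.1 p.2} :=
    (Equiv.prodCongr φ.toEquiv φ.toEquiv).subtypeEquiv (fun p => (φ.map_adj_iff).symm)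
  have hc := Fintype.card_congr e
  rw [card_pairs_A, card_pairs_B] at hc
  norm_num at hc

/-- There is a graph `E₁` on 7 vertices, not isomorphic to its complement, not cospectral with
its complement, with `E(E₁) = E(E₁ᶜ) = 5 + √17`. -/
theorem exists_complementary_equienergetic_seven :
    ∃ E₁ : SimpleGraph (Fin 7),
      ¬ Nonempty (E₁ ≃g E₁ᶜ) ∧
      (adjMat E₁).charpoly ≠ (adjMat E₁ᶜ).charpoly ∧
      energy E₁ = 5 + Real.sqrt 17 ∧ energy E₁ᶜ = 5 + Real.sqrt 17 := by
  exact ⟨g1, noniso, cpne, energyA, energyB⟩
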